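/- Let E_{ij} = b_{ij} e_i e_j^* with 0 ≤ b_{ij} and σ_*^2 := max_{i,j} b_{ij}^2. For entrywise-nonnegative matrices M_1, M_2, M_3 of appropriate dimensions, the entrywise inequality ∑_{i,j,k,l} E_{ij} M_1 E_{kl}^* M_2 E_{ij} M_3 E_{kl}^* ≤_e σ_*^4 M_3 M_1^* M_2^* holds, with equality when b_{ij} = 1 for all i, j. -/

import Mathlib

open Matrix Finset

lemma crossing_term_apply (n m : ℕ) (b : Fin n → Fin m → ℝ)
    (M₁ : Matrix (Fin m) (Fin m) ℝ) (M₂ M₃ : Matrix (Fin n) (Fin m) ℝ)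
    (i r k s : Fin n) (j l : Fin m) :
    ((b i j • single i j (1:ℝ)) * M₁ * ((b k l • single k l (1:ℝ)))ᴴ * M₂ *
        ((b i j • single i j (1:ℝ)))ᴴ * M₃ * ((b k l • single k l (1:ℝ)))ᴴ) r s
    = (if i = r then 1 else 0) * ((if k = s then 1 else 0) *
        ((b i j)^2 * ((b k l)^2 * (M₁ j l * (M₂ k j * M₃ i l))))) := by
  simp [Matrix.mul_apply, Matrix.single, Finset.mul_sum, Finset.sum_mul, mul_ite, ite_and]
  ring_nf

/-- Crossing inequality in the rectangular case (pattern `ε = (1,*,*,*)`, for which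
Lemma 4.7(c) gives the right-hand side `M₃ M₁^* M₂^*`):
for `E_{ij} = b_{ij} e_i e_j^*` and entrywise-nonnegative matrices `M₁, M₂, M₃`,
`∑_{i,j,k,l} E_{ij} M₁ E_{kl}^* M₂ E_{ij}^* M₃ E_{kl}^* ≤_e σ_*^4 M₃ M₁^* M₂^*`,
with equality when all `b_{ij} = 1`. -/
theorem crossing_inequality_rectangular
    (n m : ℕ) (hn : 1 ≤ n) (hm : 1 ≤ m)
    (b : Fin n → Fin m → ℝ) (hb_nonneg : ∀ i j, 0 ≤ b i j)
    (σs : ℝ) (hσ1 : ∀ i j, b i j ≤ σs) (hσ2 : ∃ i j, b i j = σs)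
    (E : Fin n → Fin m → Matrix (Fin n) (Fin m) ℝ)
    (hE : ∀ i j, E i j = b i j • single i j 1)
    (M₁ : Matrix (Fin m) (Fin m) ℝ) (M₂ M₃ : Matrix (Fin n) (Fin m) ℝ)
    (hM₁ : ∀ r s, 0 ≤ M₁ r s) (hM₂ : ∀ r s, 0 ≤ M₂ r s) (hM₃ : ∀ r s, 0 ≤ M₃ r s) :
    (∀ r s : Fin n,
      (∑ i : Fin n, ∑ k : Fin n, ∑ j : Fin m, ∑ l : Fin m,
          E i j * M₁ * (E k l)ᴴ * M₂ * (E i j)ᴴ * M₃ * (E k l)ᴴ) r s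
        ≤ (σs ^ 4 • (M₃ * M₁ᴴ * M₂ᴴ)) r s)
    ∧ ((∀ i j, b i j = 1) →
      (∑ i : Fin n, ∑ k : Fin n, ∑ j : Fin m, ∑ l : Fin m,
          E i j * M₁ * (E k l)ᴴ * M₂ * (E i j)ᴴ * M₃ * (E k l)ᴴ)
        = σs ^ 4 • (M₃ * M₁ᴴ * M₂ᴴ)) := by
  have key : ∀ r s : Fin n,
      (∑ i : Fin n, ∑ k : Fin n, ∑ j : Fin m, ∑ l : Fin m,
          E i j * M₁ * (E k l)ᴴ * M₂ * (E i j)ᴴ * M₃ * (E k l)ᴴ) r s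
      = ∑ j : Fin m, ∑ l : Fin m,
          (b r j)^2 * ((b s l)^2 * (M₁ j l * (M₂ s j * M₃ r l))) := by
    intro r s
    simp only [Matrix.sum_apply]
    have : ∀ i k : Fin n, ∀ j l : Fin m,
        (E i j * M₁ * (E k l)ᴴ * M₂ * (E i j)ᴴ * M₃ * (E k l)ᴴ) r s
        = (if i = r then 1 else 0) * ((if k = s then 1 else 0) *
            ((b i j)^2 * ((b k l)^2 * (M₁ j l * (M₂ s j * M₃ r l))))) := by
      intro i k j l
      rw [hE, hE, crossing_term_apply]
      by_cases hi : i = r <;> by_cases hk : k = s <;> simp [hi, hk]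
    simp only [this, ite_mul, one_mul, zero_mul, Finset.sum_ite_irrel,
      Finset.sum_const_zero, Finset.sum_ite_eq', Finset.mem_univ, if_true]
  have hrhs : ∀ r s : Fin n, (σs ^ 4 • (M₃ * M₁ᴴ * M₂ᴴ)) r s
      = ∑ j : Fin m, ∑ l : Fin m, σs^2 * (σs^2 * (M₁ j l * (M₂ s j * M₃ r l))) := by
    intro r s
    simp only [Matrix.smul_apply, Matrix.mul_apply, conjTranspose_apply, star_trivial,
      smul_eq_mul]
    rw [Finset.mul_sum]
    apply Finset.sum_congr rfl; intro j _
    rw [Finset.sum_mul, Finset.mul_sum]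
    apply Finset.sum_congr rfl; intro l _
    ring
  have hb2 : ∀ (i : Fin n) (j : Fin m), (b i j)^2 ≤ σs^2 := fun i j =>
    pow_le_pow_left₀ (hb_nonneg i j) (hσ1 i j) 2
  have hb2n : ∀ (i : Fin n) (j : Fin m), 0 ≤ (b i j)^2 := fun i j => sq_nonneg _
  constructor
  · intro r s
    rw [key, hrhs]
    apply Finset.sum_le_sum; intro j _
    apply Finset.sum_le_sum; intro l _
    have hM : 0 ≤ M₁ j l * (M₂ s j * M₃ r l) :=
      mul_nonneg (hM₁ j l) (mul_nonneg (hM₂ s j) (hM₃ r l))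
    have h1 : (b r j)^2 * ((b s l)^2 * (M₁ j l * (M₂ s j * M₃ r l)))
        ≤ σs^2 * ((b s l)^2 * (M₁ j l * (M₂ s j * M₃ r l))) :=
      mul_le_mul_of_nonneg_right (hb2 r j) (mul_nonneg (hb2n s l) hM)
    have h2 : σs^2 * ((b s l)^2 * (M₁ j l * (M₂ s j * M₃ r l)))
        ≤ σs^2 * (σs^2 * (M₁ j l * (M₂ s j * M₃ r l))) := by
      have : (b s l)^2 * (M₁ j l * (M₂ s j * M₃ r l))
          ≤ σs^2 * (M₁ j l * (M₂ s j * M₃ r l)) :=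
        mul_le_mul_of_nonneg_right (hb2 s l) hM
      exact mul_le_mul_of_nonneg_left this (sq_nonneg σs)
    exact h1.trans h2
  · intro hb1
    have hσ : σs = 1 := by obtain ⟨i, j, h⟩ := hσ2; rw [← h, hb1]
    ext r s
    rw [key, hrhs, hσ]
    simp [hb1]
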